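/- Let π be a permutation avoiding 2143 and 3142. Let i < j be two horizontal gaps of π, let x be an index with i < x and x not an LR-maximum and x less than the next horizontal gap after i, and likewise let y be an index in the j-th gap region (j < y, y not an LR-maximum, y less than the next horizontal gap after j). Then π(x) > π(y). In other words, the non-LR-maximum entries between consecutive horizontal gaps form blocks arranged in a skew-sum (decreasing) pattern. -/

import Mathlib

/-- A pattern `τ` (a word on `Fin k`) occurs in the permutation `π` of length `n`. -/
def Contains {k n : ℕ} (τ : Fin k → Fin k) (π : Equiv.Perm (Fin n)) : Prop :=
  ∃ f : Fin k → Fin n, StrictMono f ∧ ∀ i j : Fin k, τ i < τ j ↔ π (f i) < π (f j)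

/-- The permutation `π` avoids the pattern `τ`. -/
def Avoids {k n : ℕ} (τ : Fin k → Fin k) (π : Equiv.Perm (Fin n)) : Prop :=
  ¬ Contains τ π

def pat132 : Fin 3 → Fin 3 := ![0, 2, 1]
def pat2143 : Fin 4 → Fin 4 := ![1, 0, 3, 2]
def pat3142 : Fin 4 → Fin 4 := ![2, 0, 3, 1]
def pat4132 : Fin 4 → Fin 4 := ![3, 0, 2, 1]
def pat2413 : Fin 4 → Fin 4 := ![1, 3, 0, 2]
def pat263514 : Fin 6 → Fin 6 := ![1, 5, 2, 4, 0, 3]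

/-- `i` is a left-to-right maximum of `π`. -/
def IsLRMax {n : ℕ} (π : Equiv.Perm (Fin n)) (i : Fin n) : Prop :=
  ∀ j, j < i → π j < π i

/-- `i` is a leading maximum of `π`: all positions up to `i` are LR-maxima. -/
def IsLeadingMax {n : ℕ} (π : Equiv.Perm (Fin n)) (i : Fin n) : Prop :=
  ∀ j, j ≤ i → IsLRMax π j

/-- `ℓ(π)`, the number of leading maxima of `π`. -/
noncomputable def numLeading {n : ℕ} (π : Equiv.Perm (Fin n)) : ℕ :=
  Set.ncard {i : Fin n | IsLeadingMax π i}

/-- `i` is a horizontal gap of `π`: an LR-maximum that is also a descent. -/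
def IsHorizGap {n : ℕ} (π : Equiv.Perm (Fin n)) (i : Fin n) : Prop :=
  IsLRMax π i ∧ ∃ h : (i : ℕ) + 1 < n, π ⟨(i : ℕ) + 1, h⟩ < π i

/-- `x` lies in the gap region following the horizontal gap `g`: it is a
non-LR-maximum position after `g` and before the next horizontal gap. -/
def InGapRegion {n : ℕ} (π : Equiv.Perm (Fin n)) (g x : Fin n) : Prop :=
  g < x ∧ ¬ IsLRMax π x ∧ ∀ g' : Fin n, IsHorizGap π g' → g < g' → x < g'

theorem stmt2 {n : ℕ} (π : Equiv.Perm (Fin n))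
    (h2143 : Avoids pat2143 π) (h3142 : Avoids pat3142 π)
    (i j x y : Fin n) (hi : IsHorizGap π i) (hj : IsHorizGap π j) (hij : i < j)
    (hx : InGapRegion π i x) (hy : InGapRegion π j y) :
    π y < π x := by

  by_contra hcon
  push_neg at hcon
  obtain ⟨hix, hnlx, hxb⟩ := hx
  obtain ⟨hjy, hnly, _⟩ := hy
  have hxj : x < j := hxb j hj hij
  have hxy : x < y := hxj.trans hjy
  have hxy' : π x < π y := lt_of_le_of_ne hcon (fun h => hxy.ne (π.injective h))
  -- argmax before x
  obtain ⟨p, hpmem, hpmax⟩ := Finset.exists_max_image (Finset.univ.filter (· < x)) π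
    ⟨i, Finset.mem_filter.mpr ⟨Finset.mem_univ _, hix⟩⟩
  have hpx : p < x := (Finset.mem_filter.mp hpmem).2
  have hpmax' : ∀ a : Fin n, a < x → π a ≤ π p := fun a ha =>
    hpmax a (Finset.mem_filter.mpr ⟨Finset.mem_univ _, ha⟩)
  obtain ⟨q, hqmem, hqmax⟩ := Finset.exists_max_image (Finset.univ.filter (· < y)) π
    ⟨j, Finset.mem_filter.mpr ⟨Finset.mem_univ _, hjy⟩⟩
  have hqy : q < y := (Finset.mem_filter.mp hqmem).2
  have hqmax' : ∀ a : Fin n, a < y → π a ≤ π q := fun a ha =>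
    hqmax a (Finset.mem_filter.mpr ⟨Finset.mem_univ _, ha⟩)
  -- π x < π p
  unfold IsLRMax at hnlx hnly
  push_neg at hnlx hnly
  obtain ⟨a, hax, hax'⟩ := hnlx
  have hxp : π x < π p := lt_of_lt_of_le
    (lt_of_le_of_ne hax' (fun h => hax.ne (π.injective h.symm))) (hpmax' a hax)
  obtain ⟨b, hby, hby'⟩ := hnly
  have hyq : π y < π q := lt_of_lt_of_le
    (lt_of_le_of_ne hby' (fun h => hby.ne (π.injective h.symm))) (hqmax' b hby)
  -- j ≤ q
  have hjq : j ≤ q := by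
    by_contra h
    push_neg at h
    exact absurd (hqmax' j hjy) (not_le.mpr (hj.1 q h))
  have hxq : x < q := lt_of_lt_of_le hxj hjq
  have hpq : π p < π q := lt_of_lt_of_le (hj.1 p (hpx.trans hxj)) (hqmax' j hjy)
  have hpy : p < y := hpx.trans hxy
  have hqy' : π q ≠ π y := fun h => hqy.ne (π.injective h)
  have H1 : (π x : ℕ) < π p := hxp
  have H2 : (π x : ℕ) < π y := hxy'
  have H3 : (π y : ℕ) < π q := hyq
  have H4 : (π p : ℕ) < π q := hpq
  have hmono : StrictMono ![p, x, q, y] := by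
    rw [Fin.strictMono_iff_lt_succ]
    intro k
    fin_cases k
    · simpa using hpx
    · simpa using hxq
    · simpa using hqy
  rcases lt_or_ge (π p) (π y) with hc | hc
  · have H5 : (π p : ℕ) < π y := hc
    exact h2143 ⟨![p, x, q, y], hmono, by
      intro a b
      have e0 : ![p, x, q, y] 0 = p := rfl
      have e1 : ![p, x, q, y] 1 = x := rfl
      have e2 : ![p, x, q, y] 2 = q := rfl
      have e3 : ![p, x, q, y] 3 = y := rfl
      fin_cases a <;> fin_cases b <;>
        simp only [show (⟨0, by omega⟩ : Fin 4) = 0 from rfl,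
          show (⟨1, by omega⟩ : Fin 4) = 1 from rfl,
          show (⟨2, by omega⟩ : Fin 4) = 2 from rfl,
          show (⟨3, by omega⟩ : Fin 4) = 3 from rfl, e0, e1, e2, e3, pat2143] <;>
        simp only [Fin.lt_def, Fin.isValue, Matrix.cons_val] <;> norm_num <;> omega⟩
  · have hc' : π y < π p := lt_of_le_of_ne hc (fun h => hpy.ne (π.injective h.symm))
    have H5 : (π y : ℕ) < π p := hc'
    exact h3142 ⟨![p, x, q, y], hmono, by
      intro a b
      have e0 : ![p, x, q, y] 0 = p := rfl
      have e1 : ![p, x, q, y] 1 = x := rfl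
      have e2 : ![p, x, q, y] 2 = q := rfl
      have e3 : ![p, x, q, y] 3 = y := rfl
      fin_cases a <;> fin_cases b <;>
        simp only [show (⟨0, by omega⟩ : Fin 4) = 0 from rfl,
          show (⟨1, by omega⟩ : Fin 4) = 1 from rfl,
          show (⟨2, by omega⟩ : Fin 4) = 2 from rfl,
          show (⟨3, by omega⟩ : Fin 4) = 3 from rfl, e0, e1, e2, e3, pat3142] <;>
        simp only [Fin.lt_def, Fin.isValue, Matrix.cons_val] <;> norm_num <;> omega⟩
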